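/- Sample lower bound for purity testing (Theorem thm:purity, explicit form): Let d ≥ 2, ε ∈ (0, 1), and S ≥ 1. Suppose T is a matrix indexed by (Fin S → Fin d) with 0 ⊑ T ⊑ 1 (Loewner) such that (completeness) tr(T * (ψψ†)^{⊗S}) ≥ 2/3 for every unit vector ψ : Fin d → ℂ, and (soundness) tr(T * ρ^{⊗S}) ≤ 1/3 for every density matrix ρ on Fin d satisfying d_tr(ρ, ψψ†) ≥ ε for every unit vector ψ : Fin d → ℂ. Then (1 − ε)^S ≤ 8/9, and consequently S ≥ 1/(9ε). -/

import Mathlib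

open scoped ComplexConjugate ComplexOrder Kronecker Matrix
open MeasureTheory

namespace PaperStmt

/-- The rank-one matrix `ψψ†` associated with a vector `ψ`. -/
noncomputable def outer {ι : Type*} (ψ : ι → ℂ) : Matrix ι ι ℂ :=
  Matrix.of fun x y => ψ x * conj (ψ y)

/-- The `N`-fold tensor power of a square matrix `ρ`. -/
noncomputable def tpow {ι : Type*} (ρ : Matrix ι ι ℂ) (N : ℕ) : Matrix (Fin N → ι) (Fin N → ι) ℂ :=
  Matrix.of fun x y => ∏ i, ρ (x i) (y i)

/-- `ψ` is a unit vector (for the ℓ² norm). -/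
def IsUnitVec {ι : Type*} [Fintype ι] (ψ : ι → ℂ) : Prop :=
  ∑ x, Complex.normSq (ψ x) = 1

/-- `0 ⊑ T ⊑ 1` in the Loewner order. -/
def IsTester {κ : Type*} [Fintype κ] [DecidableEq κ] (T : Matrix κ κ ℂ) : Prop :=
  T.PosSemidef ∧ ((1 : Matrix κ κ ℂ) - T).PosSemidef

/-- `ρ` is a density matrix: positive semidefinite with unit trace. -/
def IsDensity {ι : Type*} [Fintype ι] (ρ : Matrix ι ι ℂ) : Prop :=
  ρ.PosSemidef ∧ ρ.trace = 1

/-- The acceptance probability `tr (T · ρ^{⊗N})` of a tester `T` on `N` samples of `ρ`. -/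
noncomputable def acc {ι : Type*} [Fintype ι] {N : ℕ}
    (T : Matrix (Fin N → ι) (Fin N → ι) ℂ) (ρ : Matrix ι ι ℂ) : ℝ :=
  ((T * tpow ρ N).trace).re

/-- The trace distance `½ ∑ᵢ |λᵢ(ρ - σ)|` between (Hermitian) matrices. -/
noncomputable def traceDist {κ : Type*} [Fintype κ] [DecidableEq κ]
    (ρ σ : Matrix κ κ ℂ) : ℝ :=
  if h : (ρ - σ).IsHermitian then (1 / 2) * ∑ i, |h.eigenvalues i| else 0

/-- The local tester on `H_A` determined by a matrix `M` acting on Alice's registers. -/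
noncomputable def localA {d N : ℕ} (M : Matrix (Fin N → Fin d) (Fin N → Fin d) ℂ) :
    Matrix (Fin N → Fin d × Fin d) (Fin N → Fin d × Fin d) ℂ :=
  Matrix.of fun x y =>
    M (fun i => (x i).1) (fun i => (y i).1) *
      (if (fun i => (x i).2) = (fun i => (y i).2) then 1 else 0)

/-- The vector `(I ⊗ U) ψ` : the unitary `U` applied to the `B` part of `ψ`. -/
noncomputable def applyB {d : ℕ} (U : Matrix (Fin d) (Fin d) ℂ) (ψ : Fin d × Fin d → ℂ) :
    Fin d × Fin d → ℂ :=
  fun p => ∑ k, U p.2 k * ψ (p.1, k)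

/-- The partial trace over the second (`B`) tensor factor. -/
noncomputable def ptraceB {d : ℕ} (M : Matrix (Fin d × Fin d) (Fin d × Fin d) ℂ) :
    Matrix (Fin d) (Fin d) ℂ :=
  Matrix.of fun a b => ∑ j, M (a, j) (b, j)


section Helpers

set_option linter.unusedSectionVars false

variable {n : Type*} [Fintype n] [DecidableEq n]

lemma re_star_dot (x : n → ℂ) :
    (dotProduct (star x) x).re = ∑ i, Complex.normSq (x i) := by
  rw [dotProduct, Complex.re_sum]
  refine Finset.sum_congr rfl fun i _ => ?_
  simp only [Pi.star_apply, RCLike.star_def]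
  rw [mul_comm, Complex.mul_conj, Complex.ofReal_re]

lemma re_star_dot_diag (f : n → ℝ) (x : n → ℂ) :
    (dotProduct (star x) (Matrix.diagonal (fun i => (f i : ℂ)) *ᵥ x)).re
      = ∑ i, f i * Complex.normSq (x i) := by
  rw [dotProduct, Complex.re_sum]
  refine Finset.sum_congr rfl fun i _ => ?_
  rw [Matrix.mulVec_diagonal]
  simp only [Pi.star_apply, RCLike.star_def]
  rw [show (starRingEnd ℂ) (x i) * ((f i : ℂ) * x i) = (f i : ℂ) * (x i * (starRingEnd ℂ) (x i))
    by ring, Complex.mul_conj, ← Complex.ofReal_mul, Complex.ofReal_re]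

lemma trace_re_eq_sum_eigenvalues (A : Matrix n n ℂ) (hA : A.IsHermitian) :
    A.trace.re = ∑ i, hA.eigenvalues i := by
  have h : A.trace = ∑ i, (hA.eigenvalues i : ℂ) := by
    conv_lhs => rw [hA.spectral_theorem, Unitary.conjStarAlgAut_apply]
    rw [Matrix.trace_mul_cycle,
      Matrix.mem_unitaryGroup_iff'.mp hA.eigenvectorUnitary.2, one_mul, Matrix.trace_diagonal]
    rfl
  rw [h, Complex.re_sum]
  simp

lemma rayleigh_min (A : Matrix n n ℂ) (hA : A.IsHermitian) (v : n → ℂ)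
    (hv : ∑ x, Complex.normSq (v x) = 1) :
    ∑ i, min (hA.eigenvalues i) 0 ≤ (dotProduct (star v) (A *ᵥ v)).re := by
  set U : Matrix n n ℂ := (hA.eigenvectorUnitary : Matrix n n ℂ) with hU
  have hUU : U * star U = 1 := Matrix.mem_unitaryGroup_iff.mp hA.eigenvectorUnitary.2
  set w : n → ℂ := star U *ᵥ v with hw
  have hsw : star w = star v ᵥ* U := by
    rw [hw, Matrix.star_mulVec]
    simp [Matrix.star_eq_conjTranspose]
  have key1 : dotProduct (star v) (A *ᵥ v)
      = dotProduct (star w)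
          (Matrix.diagonal (fun i => (hA.eigenvalues i : ℂ)) *ᵥ w) := by
    conv_lhs => rw [hA.spectral_theorem, Unitary.conjStarAlgAut_apply]
    rw [← Matrix.mulVec_mulVec, ← Matrix.mulVec_mulVec, Matrix.dotProduct_mulVec, ← hsw]
    rfl
  have key3 : ∑ i, Complex.normSq (w i) = 1 := by
    have h1 : dotProduct (star w) w = dotProduct (star v) v := by
      rw [hsw, hw, ← Matrix.dotProduct_mulVec, Matrix.mulVec_mulVec, hUU, Matrix.one_mulVec]
    have := congrArg Complex.re h1
    rwa [re_star_dot, re_star_dot, hv] at this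
  rw [key1, re_star_dot_diag]
  refine Finset.sum_le_sum fun i _ => ?_
  have h0 : 0 ≤ Complex.normSq (w i) := Complex.normSq_nonneg _
  have h1 : Complex.normSq (w i) ≤ 1 := by
    rw [← key3]
    exact Finset.single_le_sum (fun j _ => Complex.normSq_nonneg (w j)) (Finset.mem_univ i)
  rcases le_total 0 (hA.eigenvalues i) with h | h
  · rw [min_eq_right h]; positivity
  · rw [min_eq_left h]; nlinarith

end Helpers

/-- Theorem `thm:purity`, explicit form: sample lower bound for purity
testing. -/
theorem stmt_12 (d : ℕ) (hd : 2 ≤ d) (ε : ℝ) (hε : ε ∈ Set.Ioo (0 : ℝ) 1)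
    (S : ℕ) (hS : 1 ≤ S)
    (T : Matrix (Fin S → Fin d) (Fin S → Fin d) ℂ)
    (hT : IsTester T)
    (hcomp : ∀ ψ : Fin d → ℂ, IsUnitVec ψ → 2 / 3 ≤ acc T (outer ψ))
    (hsound : ∀ ρ : Matrix (Fin d) (Fin d) ℂ, IsDensity ρ →
      (∀ ψ : Fin d → ℂ, IsUnitVec ψ → ε ≤ traceDist ρ (outer ψ)) →
      acc T ρ ≤ 1 / 3) :
    (1 - ε) ^ S ≤ 8 / 9 ∧ 1 / (9 * ε) ≤ (S : ℝ) := by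
  obtain ⟨hε0, hε1⟩ := hε
  have key : (1 - ε) ^ S ≤ 8 / 9 := by
    rcases le_or_gt ε (1 / 2) with hhalf | hhalf
    · -- main argument
      set a : Fin d := ⟨0, by omega⟩ with ha
      set b : Fin d := ⟨1, by omega⟩ with hb
      have hab : a ≠ b := by simp [ha, hb, Fin.ext_iff]
      set c : Fin d → ℝ := fun i => if i = a then 1 - ε else if i = b then ε else 0 with hc
      have hc0 : ∀ i, 0 ≤ c i := by
        intro i; rw [hc]; dsimp only; split_ifs <;> linarith
      have hc1 : ∀ i, c i ≤ 1 - ε := by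
        intro i; rw [hc]; dsimp only; split_ifs <;> linarith
      have hcsum : ∑ i, c i = 1 := by
        rw [← Finset.sum_subset (Finset.subset_univ {a, b})
          (fun x _ hx => by
            simp only [Finset.mem_insert, Finset.mem_singleton, not_or] at hx
            simp [hc, hx.1, hx.2])]
        rw [Finset.sum_pair hab]
        simp [hc, hab.symm]
      set ρ : Matrix (Fin d) (Fin d) ℂ := Matrix.diagonal (fun i => (c i : ℂ)) with hρ
      have hρdens : IsDensity ρ := by
        constructor
        · exact Matrix.PosSemidef.diagonal fun i => Complex.zero_le_real.mpr (hc0 i)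
        · rw [hρ, Matrix.trace_diagonal, ← Complex.ofReal_sum, hcsum, Complex.ofReal_one]
      have hfar : ∀ ψ : Fin d → ℂ, IsUnitVec ψ → ε ≤ traceDist ρ (outer ψ) := by
        intro ψ hψ
        have hψ1 : (∑ x, ψ x * conj (ψ x)) = 1 := by
          calc ∑ x, ψ x * conj (ψ x) = ∑ x, ((Complex.normSq (ψ x) : ℂ)) := by
                refine Finset.sum_congr rfl fun x _ => ?_
                exact Complex.mul_conj (ψ x)
            _ = 1 := by rw [← Complex.ofReal_sum, hψ, Complex.ofReal_one]
        have hσH : (outer ψ).IsHermitian := by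
          refine Matrix.IsHermitian.ext fun x y => ?_
          simp only [outer, Matrix.conjTranspose_apply, Matrix.of_apply, star_mul', RCLike.star_def,
            Complex.conj_conj]
          ring
        have hρH : ρ.IsHermitian := hρdens.1.1
        have hAH : (ρ - outer ψ).IsHermitian := hρH.sub hσH
        rw [traceDist, dif_pos hAH]
        have htr0 : (ρ - outer ψ).trace = 0 := by
          rw [Matrix.trace_sub]
          have h1 : (outer ψ).trace = 1 := by
            rw [Matrix.trace]
            simpa [outer, Matrix.diag] using hψ1
          rw [h1, hρdens.2, sub_self]
        have hsum0 : ∑ i, hAH.eigenvalues i = 0 := by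
          rw [← trace_re_eq_sum_eigenvalues _ hAH, htr0, Complex.zero_re]
        have hray := rayleigh_min _ hAH ψ hψ
        -- compute the Rayleigh quotient
        have hσq : dotProduct (star ψ) (outer ψ *ᵥ ψ) = 1 := by
          have hψ1' : ∑ x, conj (ψ x) * ψ x = 1 := by
            rw [← hψ1]; refine Finset.sum_congr rfl fun x _ => mul_comm _ _
          have hmv : outer ψ *ᵥ ψ = ψ := by
            funext x
            rw [Matrix.mulVec, dotProduct]
            simp only [outer, Matrix.of_apply]
            rw [show ∑ y, ψ x * conj (ψ y) * ψ y = ψ x * ∑ y, conj (ψ y) * ψ y by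
              rw [Finset.mul_sum]; exact Finset.sum_congr rfl fun y _ => by ring]
            rw [hψ1', mul_one]
          rw [hmv, dotProduct]
          rw [← hψ1']
          rfl
        have hρq : (dotProduct (star ψ) (ρ *ᵥ ψ)).re ≤ 1 - ε := by
          rw [hρ, re_star_dot_diag]
          calc ∑ i, c i * Complex.normSq (ψ i)
              ≤ ∑ i, (1 - ε) * Complex.normSq (ψ i) :=
                Finset.sum_le_sum fun i _ =>
                  mul_le_mul_of_nonneg_right (hc1 i) (Complex.normSq_nonneg _)
            _ = (1 - ε) * ∑ i, Complex.normSq (ψ i) := by rw [Finset.mul_sum]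
            _ = 1 - ε := by rw [hψ, mul_one]
        have hcomp2 : (dotProduct (star ψ) ((ρ - outer ψ) *ᵥ ψ)).re ≤ -ε := by
          rw [Matrix.sub_mulVec, dotProduct_sub, Complex.sub_re, hσq]
          simp only [Complex.one_re]
          linarith
        -- combine
        have h6 : ∑ i, -(min (hAH.eigenvalues i) 0)
            = (1 / 2) * ∑ i, |hAH.eigenvalues i| - (1 / 2) * ∑ i, hAH.eigenvalues i := by
          rw [Finset.mul_sum, Finset.mul_sum, ← Finset.sum_sub_distrib]
          refine Finset.sum_congr rfl fun i _ => ?_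
          rcases le_total (hAH.eigenvalues i) 0 with h | h
          · rw [min_eq_left h, abs_of_nonpos h]; ring
          · rw [min_eq_right h, abs_of_nonneg h]; ring
        have h7 : ε ≤ ∑ i, -(min (hAH.eigenvalues i) 0) := by
          rw [Finset.sum_neg_distrib]
          linarith
        rw [h6, hsum0] at h7
        linarith
      have hacc := hsound ρ hρdens hfar
      -- compute acc T ρ
      have htpowρ : tpow ρ S = Matrix.diagonal (fun x : Fin S → Fin d => ∏ i, (c (x i) : ℂ)) := by
        ext x y
        by_cases hxy : x = y
        · subst hxy
          simp [tpow, hρ, Matrix.diagonal_apply_eq]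
        · obtain ⟨i, hi⟩ := Function.ne_iff.mp hxy
          rw [Matrix.diagonal_apply_ne _ hxy]
          simp only [tpow, Matrix.of_apply]
          exact Finset.prod_eq_zero (Finset.mem_univ i)
            (by rw [hρ]; exact Matrix.diagonal_apply_ne _ hi)
      have haccρ : acc T ρ = ∑ x, (T x x).re * ∏ i, c (x i) := by
        rw [acc, htpowρ]
        have htr : (T * Matrix.diagonal fun x : Fin S → Fin d => ∏ i, (c (x i) : ℂ)).trace
            = ∑ x, T x x * ∏ i, (c (x i) : ℂ) := by
          rw [Matrix.trace]
          refine Finset.sum_congr rfl fun x _ => ?_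
          rw [Matrix.diag_apply, Matrix.mul_diagonal]
        rw [htr, Complex.re_sum]
        refine Finset.sum_congr rfl fun x _ => ?_
        rw [← Complex.ofReal_prod, Complex.mul_re, Complex.ofReal_re, Complex.ofReal_im,
          mul_zero, sub_zero]
      -- the pure state
      set ψ₀ : Fin d → ℂ := fun i => if i = a then 1 else 0 with hψ₀
      have hψ₀unit : IsUnitVec ψ₀ := by
        rw [IsUnitVec]
        rw [hψ₀]
        simp [apply_ite Complex.normSq]
      set ca : Fin S → Fin d := fun _ => a with hca
      have houter : acc T (outer ψ₀) = (T ca ca).re := by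
        have htp : tpow (outer ψ₀) S = Matrix.of fun x y : Fin S → Fin d =>
            (if x = ca then (1 : ℂ) else 0) * (if y = ca then 1 else 0) := by
          ext x y
          simp only [tpow, outer, Matrix.of_apply]
          rw [Finset.prod_mul_distrib]
          congr 1
          · by_cases hx : x = ca
            · subst hx; simp [hψ₀, hca]
            · rw [if_neg hx]
              obtain ⟨i, hi⟩ := Function.ne_iff.mp hx
              exact Finset.prod_eq_zero (Finset.mem_univ i) (by simp [hψ₀, hca] at hi ⊢; simp [hi])
          · by_cases hy : y = ca
            · subst hy; simp [hψ₀, hca]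
            · rw [if_neg hy]
              obtain ⟨i, hi⟩ := Function.ne_iff.mp hy
              refine Finset.prod_eq_zero (Finset.mem_univ i) ?_
              have : ψ₀ (y i) = 0 := by simp [hψ₀, hca] at hi ⊢; simp [hi]
              rw [this, map_zero]
        rw [acc, htp]
        have : (T * Matrix.of fun x y : Fin S → Fin d =>
            (if x = ca then (1 : ℂ) else 0) * (if y = ca then 1 else 0)).trace = T ca ca := by
          rw [Matrix.trace]
          simp only [Matrix.diag_apply, Matrix.mul_apply, Matrix.of_apply]
          rw [Finset.sum_comm]
          simp [Finset.sum_ite_eq', mul_ite, ite_mul]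
        rw [this]
      have hTdiag : ∀ x, 0 ≤ (T x x).re := by
        intro x
        have h := hT.1.re_dotProduct_nonneg (Pi.single x 1)
        have he : dotProduct (star (Pi.single x 1)) (T *ᵥ Pi.single x 1) = T x x := by
          rw [Matrix.mulVec_single]
          simp [dotProduct, Pi.single_apply, apply_ite]
        rwa [he] at h
      have hprodc : ∀ x : Fin S → Fin d, 0 ≤ ∏ i, c (x i) :=
        fun x => Finset.prod_nonneg fun i _ => hc0 (x i)
      have hsingle : (T ca ca).re * (1 - ε) ^ S ≤ acc T ρ := by
        rw [haccρ]
        have : (T ca ca).re * ∏ i : Fin S, c (ca i) = (T ca ca).re * (1 - ε) ^ S := by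
          congr 1
          rw [hca]
          simp [hc]
        rw [← this]
        exact Finset.single_le_sum
          (f := fun x : Fin S → Fin d => (T x x).re * ∏ i, c (x i))
          (fun x _ => mul_nonneg (hTdiag x) (hprodc x)) (Finset.mem_univ ca)
      have hcompca : 2 / 3 ≤ (T ca ca).re := by
        have := hcomp ψ₀ hψ₀unit
        rwa [houter] at this
      have hpow0 : (0 : ℝ) ≤ (1 - ε) ^ S := pow_nonneg (by linarith) S
      nlinarith
    · -- ε > 1/2 : easy
      calc (1 - ε) ^ S ≤ (1 - ε) ^ 1 :=
            pow_le_pow_of_le_one (by linarith) (by linarith) hS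
        _ = 1 - ε := pow_one _
        _ ≤ 8 / 9 := by linarith
  refine ⟨key, ?_⟩
  have hb : 1 - (S : ℝ) * ε ≤ (1 - ε) ^ S := by
    have h := one_add_mul_le_pow (a := -ε) (by linarith) S
    have : (1 : ℝ) + (S : ℝ) * (-ε) = 1 - (S : ℝ) * ε := by ring
    rw [this] at h
    have h2 : (1 : ℝ) + -ε = 1 - ε := by ring
    rwa [h2] at h
  rw [div_le_iff₀ (by positivity)]
  nlinarith

end PaperStmt
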